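/- Let A, A* be a Leonard pair in Mat_{d+1}(K) with A lower triangular and A*_{ij} = 0 whenever j - i > 1. Let E_i denote the primitive idempotent of A for the eigenvalue A_{ii}. Then E_i A* E_j = 0 whenever j - i > 1; consequently E_0, E_1, ..., E_d is an idempotent sequence for A, A*. -/
import Mathlib


open Polynomial Matrix Finset

variable {K : Type*} [Field K]

/-- The primitive idempotent of `A` associated with eigenvalue `θ i`:
`E i = ∏_{j ≠ i} (A - θ j • 1) / (θ i - θ j)`. -/
noncomputable def primIdem {d : ℕ} (A : Matrix (Fin (d + 1)) (Fin (d + 1)) K)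
    (θ : Fin (d + 1) → K) (i : Fin (d + 1)) : Matrix (Fin (d + 1)) (Fin (d + 1)) K :=
  Polynomial.aeval A
    (∏ j ∈ Finset.univ.erase i,
      (Polynomial.C (θ i - θ j)⁻¹ * (Polynomial.X - Polynomial.C (θ j))))

/-- `A` is multiplicity-free with (distinct) eigenvalues `θ 0, …, θ d`. -/
def MultFreeWith {d : ℕ} (A : Matrix (Fin (d + 1)) (Fin (d + 1)) K)
    (θ : Fin (d + 1) → K) : Prop :=
  Function.Injective θ ∧ A.charpoly = ∏ i, (Polynomial.X - Polynomial.C (θ i))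

/-- `θ` is an eigenvalue sequence for the (ordered) pair `A, B`: the corresponding
ordering of the primitive idempotents of `A` is an idempotent sequence for `A, B`. -/
def IsEigenvalueSeq {d : ℕ} (A B : Matrix (Fin (d + 1)) (Fin (d + 1)) K)
    (θ : Fin (d + 1) → K) : Prop :=
  MultFreeWith A θ ∧
    ∀ i j : Fin (d + 1),
      (1 < |((i : ℕ) : ℤ) - ((j : ℕ) : ℤ)| → primIdem A θ i * B * primIdem A θ j = 0) ∧
      (|((i : ℕ) : ℤ) - ((j : ℕ) : ℤ)| = 1 → primIdem A θ i * B * primIdem A θ j ≠ 0)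

/-- `A, B` is a Leonard pair in `Mat_{d+1}(K)`. -/
def IsLeonardPair {d : ℕ} (A B : Matrix (Fin (d + 1)) (Fin (d + 1)) K) : Prop :=
  (∃ θ, IsEigenvalueSeq A B θ) ∧ (∃ θs, IsEigenvalueSeq B A θs)



lemma colZero {d : ℕ} (A : Matrix (Fin (d + 1)) (Fin (d + 1)) K)
    (hA : ∀ i j : Fin (d + 1), (i : ℕ) < (j : ℕ) → A i j = 0)
    (s : Finset (Fin (d + 1))) :
    ∀ r : Fin (d + 1), (∀ l, r ≤ l → l ∈ s) → ∀ p,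
      (Polynomial.aeval A (∏ j ∈ s, (X - C (A j j)))) p r = 0 := by
  induction s using Finset.strongInduction with
  | _ s ih =>
  intro r hs p
  have hrs : r ∈ s := hs r le_rfl
  rw [← Finset.insert_erase hrs, Finset.prod_insert (Finset.notMem_erase _ _), mul_comm,
    _root_.map_mul, Matrix.mul_apply]
  apply Finset.sum_eq_zero
  intro k _
  rcases lt_or_ge (r : ℕ) (k : ℕ) with h | h
  · have hcol := ih (s.erase r) (Finset.erase_ssubset hrs) k
      (fun l hl => Finset.mem_erase.mpr
        ⟨by have := hl; rw [Fin.le_def] at this; exact Fin.ne_of_val_ne (by omega),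
         hs l (by rw [Fin.le_def] at hl ⊢; omega)⟩) p
    rw [hcol, zero_mul]
  · have hz : (Polynomial.aeval A (X - C (A r r))) k r = 0 := by
      rw [map_sub, aeval_X, aeval_C, Matrix.sub_apply, Matrix.algebraMap_matrix_apply]
      rcases eq_or_lt_of_le h with h' | h'
      · have hkr : k = r := Fin.ext h'
        simp [hkr]
      · rw [hA k r h', if_neg (Fin.ne_of_val_ne (by omega))]
        ring
    rw [hz, mul_zero]

lemma rowZero {d : ℕ} (A : Matrix (Fin (d + 1)) (Fin (d + 1)) K)
    (hA : ∀ i j : Fin (d + 1), (i : ℕ) < (j : ℕ) → A i j = 0)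
    (s : Finset (Fin (d + 1))) :
    ∀ r : Fin (d + 1), (∀ l, l ≤ r → l ∈ s) → ∀ q,
      (Polynomial.aeval A (∏ j ∈ s, (X - C (A j j)))) r q = 0 := by
  induction s using Finset.strongInduction with
  | _ s ih =>
  intro r hs q
  have hrs : r ∈ s := hs r le_rfl
  rw [← Finset.insert_erase hrs, Finset.prod_insert (Finset.notMem_erase _ _),
    _root_.map_mul, Matrix.mul_apply]
  apply Finset.sum_eq_zero
  intro k _
  rcases lt_or_ge (k : ℕ) (r : ℕ) with h | h
  · have hrow := ih (s.erase r) (Finset.erase_ssubset hrs) k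
      (fun l hl => Finset.mem_erase.mpr
        ⟨by rw [Fin.le_def] at hl; exact Fin.ne_of_val_ne (by omega),
         hs l (by rw [Fin.le_def] at hl ⊢; omega)⟩) q
    rw [hrow, mul_zero]
  · have hz : (Polynomial.aeval A (X - C (A r r))) r k = 0 := by
      rw [map_sub, aeval_X, aeval_C, Matrix.sub_apply, Matrix.algebraMap_matrix_apply]
      rcases eq_or_lt_of_le h with h' | h'
      · have hkr : r = k := Fin.ext h'
        simp [hkr]
      · rw [hA r k h', if_neg (Fin.ne_of_val_ne (by omega))]
        ring
    rw [hz, zero_mul]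

lemma primIdem_eq_smul {d : ℕ} (A : Matrix (Fin (d + 1)) (Fin (d + 1)) K)
    (θ : Fin (d + 1) → K) (i : Fin (d + 1)) :
    primIdem A θ i = (∏ j ∈ Finset.univ.erase i, (θ i - θ j)⁻¹) •
      Polynomial.aeval A (∏ j ∈ Finset.univ.erase i, (X - C (θ j))) := by
  rw [primIdem, Finset.prod_mul_distrib, ← map_prod, _root_.map_mul, aeval_C,
    Algebra.algebraMap_eq_smul_one, smul_mul_assoc, one_mul]

lemma primIdem_col {d : ℕ} (A : Matrix (Fin (d + 1)) (Fin (d + 1)) K)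
    (hA : ∀ i j : Fin (d + 1), (i : ℕ) < (j : ℕ) → A i j = 0)
    (i p r : Fin (d + 1)) (h : (i : ℕ) < (r : ℕ)) :
    primIdem A (fun k => A k k) i p r = 0 := by
  rw [primIdem_eq_smul, Matrix.smul_apply,
    colZero A hA _ r (fun l hl => Finset.mem_erase.mpr
      ⟨Fin.ne_of_val_ne (by rw [Fin.le_def] at hl; omega), Finset.mem_univ l⟩) p, smul_zero]

lemma primIdem_row {d : ℕ} (A : Matrix (Fin (d + 1)) (Fin (d + 1)) K)
    (hA : ∀ i j : Fin (d + 1), (i : ℕ) < (j : ℕ) → A i j = 0)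
    (i p q : Fin (d + 1)) (h : (p : ℕ) < (i : ℕ)) :
    primIdem A (fun k => A k k) i p q = 0 := by
  rw [primIdem_eq_smul, Matrix.smul_apply,
    rowZero A hA _ p (fun l hl => Finset.mem_erase.mpr
      ⟨Fin.ne_of_val_ne (by rw [Fin.le_def] at hl; omega), Finset.mem_univ l⟩) q, smul_zero]

lemma part1 {d : ℕ} (A Astar : Matrix (Fin (d + 1)) (Fin (d + 1)) K)
    (hA : ∀ i j : Fin (d + 1), (i : ℕ) < (j : ℕ) → A i j = 0)
    (hAs : ∀ i j : Fin (d + 1), (i : ℕ) + 1 < (j : ℕ) → Astar i j = 0)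
    (i j : Fin (d + 1)) (hij : (i : ℕ) + 1 < (j : ℕ)) :
    primIdem A (fun k => A k k) i * Astar * primIdem A (fun k => A k k) j = 0 := by
  ext p q
  rw [Matrix.mul_apply, Matrix.zero_apply]
  apply Finset.sum_eq_zero
  intro l _
  rcases lt_or_ge (l : ℕ) (j : ℕ) with h | h
  · rw [primIdem_row A hA j l q h, mul_zero]
  · rw [Matrix.mul_apply]
    rw [Finset.sum_eq_zero, zero_mul]
    intro k _
    rcases lt_or_ge (i : ℕ) (k : ℕ) with h' | h'
    · rw [primIdem_col A hA i p k h', zero_mul]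
    · rw [hAs k l (by omega), mul_zero]

lemma charpoly_lowerTri {d : ℕ} (A : Matrix (Fin (d + 1)) (Fin (d + 1)) K)
    (hA : ∀ i j : Fin (d + 1), (i : ℕ) < (j : ℕ) → A i j = 0) :
    A.charpoly = ∏ i, (X - C (A i i)) := by
  have hbt : A.charmatrix.BlockTriangular OrderDual.toDual := by
    intro i j hij
    have hij' : i < j := OrderDual.toDual_lt_toDual.mp hij
    have hlt : (i : ℕ) < (j : ℕ) := Fin.lt_def.mp hij'
    rw [charmatrix_apply_ne _ _ _ (Fin.ne_of_val_ne (Nat.ne_of_lt hlt)),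
      hA i j hlt, map_zero, neg_zero]
  rw [Matrix.charpoly, Matrix.det_of_lowerTriangular _ hbt]
  simp [charmatrix_apply_eq]

lemma primIdem_comp {d : ℕ} (A : Matrix (Fin (d + 1)) (Fin (d + 1)) K)
    (θ : Fin (d + 1) → K) (e : Fin (d + 1) ≃ Fin (d + 1)) (i : Fin (d + 1)) :
    primIdem A (θ ∘ e) i = primIdem A θ (e i) := by
  unfold primIdem
  congr 1
  rw [show Finset.univ.erase (e i) = (Finset.univ.erase i).map e.toEmbedding by
    rw [Finset.map_erase, Finset.map_univ_equiv]
    simp, Finset.prod_map]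
  rfl

lemma diag_multiset_eq {d : ℕ} (A : Matrix (Fin (d + 1)) (Fin (d + 1)) K)
    (hA : ∀ i j : Fin (d + 1), (i : ℕ) < (j : ℕ) → A i j = 0)
    (θ : Fin (d + 1) → K) (hcp : A.charpoly = ∏ i, (X - C (θ i))) :
    Finset.univ.val.map (fun k : Fin (d + 1) => A k k) = Finset.univ.val.map θ := by
  have key : ∀ f : Fin (d + 1) → K,
      (∏ i, (X - C (f i))).roots = Finset.univ.val.map f := by
    intro f
    rw [Finset.prod_eq_multiset_prod,
      show Finset.univ.val.map (fun i => X - C (f i))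
        = (Finset.univ.val.map f).map (fun a => X - C a) by rw [Multiset.map_map]; rfl]
    exact roots_multiset_prod_X_sub_C _
  rw [← key, ← key, ← hcp, ← charpoly_lowerTri A hA]

lemma diag_injective {d : ℕ} (A : Matrix (Fin (d + 1)) (Fin (d + 1)) K)
    (hA : ∀ i j : Fin (d + 1), (i : ℕ) < (j : ℕ) → A i j = 0)
    (θ : Fin (d + 1) → K) (hθ : Function.Injective θ)
    (hcp : A.charpoly = ∏ i, (X - C (θ i))) :
    Function.Injective (fun k : Fin (d + 1) => A k k) := by
  have hmul := diag_multiset_eq A hA θ hcp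
  have hnd : (Finset.univ.val.map (fun k : Fin (d + 1) => A k k)).Nodup := by
    rw [hmul]
    exact Finset.univ.nodup.map hθ
  intro a b hab
  exact ((Multiset.nodup_map_iff_inj_on Finset.univ.nodup).mp hnd) a (Finset.mem_univ_val a)
    b (Finset.mem_univ_val b) hab

lemma diag_exists {d : ℕ} (A : Matrix (Fin (d + 1)) (Fin (d + 1)) K)
    (hA : ∀ i j : Fin (d + 1), (i : ℕ) < (j : ℕ) → A i j = 0)
    (θ : Fin (d + 1) → K) (hcp : A.charpoly = ∏ i, (X - C (θ i))) (i : Fin (d + 1)) :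
    ∃ j, θ j = A i i := by
  have hmul := diag_multiset_eq A hA θ hcp
  have : A i i ∈ Finset.univ.val.map θ := by
    rw [← hmul]
    exact Multiset.mem_map_of_mem _ (Finset.mem_univ_val i)
  obtain ⟨j, -, hj⟩ := Multiset.mem_map.mp this
  exact ⟨j, hj⟩

lemma abs_sub_succ (x y : ℤ) (h : y = x + 1) : |x - y| = 1 := by
  rw [show x - y = -1 by omega]
  decide

lemma perm_adj {d : ℕ} (σ : Fin (d + 1) ≃ Fin (d + 1))
    (H : ∀ i j : Fin (d + 1), (i : ℕ) + 1 < (j : ℕ) →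
      ¬ |(((σ i : Fin (d+1)) : ℕ) : ℤ) - (((σ j : Fin (d+1)) : ℕ) : ℤ)| = 1) :
    ∀ i j : Fin (d + 1), (j : ℕ) = (i : ℕ) + 1 →
      |(((σ i : Fin (d+1)) : ℕ) : ℤ) - (((σ j : Fin (d+1)) : ℕ) : ℤ)| = 1 := by
  set I : Fin d → Fin (d + 1) := fun a => σ.symm a.castSucc with hI
  set J : Fin d → Fin (d + 1) := fun a => σ.symm a.succ with hJ
  have hσI : ∀ a, σ (I a) = a.castSucc := fun a => σ.apply_symm_apply _
  have hσJ : ∀ a, σ (J a) = a.succ := fun a => σ.apply_symm_apply _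
  have hvI : ∀ a : Fin d, ((σ (I a) : Fin (d+1)) : ℕ) = (a : ℕ) := by
    intro a; rw [hσI]; simp
  have hvJ : ∀ a : Fin d, ((σ (J a) : Fin (d+1)) : ℕ) = (a : ℕ) + 1 := by
    intro a; rw [hσJ]; simp
  have hP : ∀ a : Fin d, ((J a : Fin (d+1)) : ℕ) = (I a : ℕ) + 1 ∨
      ((I a : Fin (d+1)) : ℕ) = (J a : ℕ) + 1 := by
    intro a
    have hne : I a ≠ J a := by
      intro h
      have := congrArg σ h
      rw [hσI, hσJ] at this
      have := congrArg Fin.val this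
      simp at this
    have hne' : (I a : ℕ) ≠ (J a : ℕ) := fun h => hne (Fin.ext h)
    by_contra hcon
    push_neg at hcon
    rcases lt_or_gt_of_ne hne' with h | h
    · exact H (I a) (J a) (by omega) (by rw [hvI, hvJ]; apply abs_sub_succ; omega)
    · exact H (J a) (I a) (by omega)
        (by rw [hvI, hvJ, abs_sub_comm]; apply abs_sub_succ; omega)
  have hgb : ∀ a : Fin d, min (I a : ℕ) (J a : ℕ) < d := by
    intro a
    have h1 : (I a : ℕ) < d + 1 := (I a).isLt
    have h2 : (J a : ℕ) < d + 1 := (J a).isLt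
    rcases hP a with h | h <;> omega
  set g : Fin d → Fin d := fun a => ⟨min (I a : ℕ) (J a : ℕ), hgb a⟩ with hg
  have hginj : Function.Injective g := by
    intro a b hab
    have hab' : min (I a : ℕ) (J a : ℕ) = min (I b : ℕ) (J b : ℕ) :=
      congrArg Fin.val hab
    have key : ∀ x y : Fin d, I x = I y → x = y := by
      intro x y h
      have := congrArg σ h
      rw [hσI, hσI] at this
      exact Fin.castSucc_injective _ this
    have keyIJ : ∀ x y : Fin d, I x = J y → (x : ℕ) = (y : ℕ) + 1 := by
      intro x y h
      have := congrArg σ h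
      rw [hσI, hσJ] at this
      have := congrArg Fin.val this
      simpa using this
    rcases hP a with ha | ha <;> rcases hP b with hb | hb
    · exact key a b (Fin.ext (by omega))
    · have h1 : I a = J b := Fin.ext (by omega)
      have h2 : J a = I b := Fin.ext (by omega)
      have e1 := keyIJ a b h1
      have e2 := keyIJ b a h2.symm
      omega
    · have h1 : J a = I b := Fin.ext (by omega)
      have h2 : I a = J b := Fin.ext (by omega)
      have e1 := keyIJ b a h1.symm
      have e2 := keyIJ a b h2
      omega
    · have h1 : J a = J b := Fin.ext (by omega)
      have := congrArg σ h1
      rw [hσJ, hσJ] at this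
      exact Fin.succ_injective _ this
  have hgsurj : Function.Surjective g :=
    Finite.surjective_of_injective hginj
  intro i j hij
  obtain ⟨a, ha⟩ := hgsurj ⟨(i : ℕ), by omega⟩
  have ha' : min (I a : ℕ) (J a : ℕ) = (i : ℕ) := congrArg Fin.val ha
  rcases hP a with h | h
  · have h1 : I a = i := Fin.ext (by omega)
    have h2 : J a = j := Fin.ext (by omega)
    rw [← h1, ← h2, hvI, hvJ]
    apply abs_sub_succ; omega
  · have h1 : J a = i := Fin.ext (by omega)
    have h2 : I a = j := Fin.ext (by omega)
    rw [← h1, ← h2, hvJ, hvI, abs_sub_comm]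
    apply abs_sub_succ; omega

theorem idempotent_seq_of_lowerTriangular {d : ℕ}
    (A Astar : Matrix (Fin (d + 1)) (Fin (d + 1)) K)
    (hLP : IsLeonardPair A Astar)
    (hA : ∀ i j : Fin (d + 1), (i : ℕ) < (j : ℕ) → A i j = 0)
    (hAs : ∀ i j : Fin (d + 1), (i : ℕ) + 1 < (j : ℕ) → Astar i j = 0) :
    (∀ i j : Fin (d + 1), (i : ℕ) + 1 < (j : ℕ) →
      primIdem A (fun k => A k k) i * Astar * primIdem A (fun k => A k k) j = 0) ∧
    IsEigenvalueSeq A Astar (fun k => A k k) := by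
  obtain ⟨⟨θ, hθ⟩, -⟩ := hLP
  have hinjθ := hθ.1.1
  have hcpθ := hθ.1.2
  have hcp : A.charpoly = ∏ i, (X - C (A i i)) := charpoly_lowerTri A hA
  have hinj' : Function.Injective (fun k : Fin (d + 1) => A k k) :=
    diag_injective A hA θ hinjθ hcpθ
  choose σ0 hσ0 using diag_exists A hA θ hcpθ
  have hσinj : Function.Injective σ0 := by
    intro a b hab
    exact hinj' (show A a a = A b b by rw [← hσ0 a, ← hσ0 b, hab])
  let e : Fin (d + 1) ≃ Fin (d + 1) :=
    Equiv.ofBijective σ0 (Finite.injective_iff_bijective.mp hσinj)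
  have hθe : θ ∘ e = fun k => A k k := funext fun k => hσ0 k
  have hE : ∀ i, primIdem A (fun k => A k k) i = primIdem A θ (e i) := by
    intro i
    rw [← hθe]
    exact primIdem_comp A θ e i
  have hpart1 := part1 A Astar hA hAs
  have H : ∀ i j : Fin (d + 1), (i : ℕ) + 1 < (j : ℕ) →
      ¬ |(((e i : Fin (d+1)) : ℕ) : ℤ) - (((e j : Fin (d+1)) : ℕ) : ℤ)| = 1 := by
    intro i j hij habs
    exact (hθ.2 (e i) (e j)).2 habs (by rw [← hE, ← hE]; exact hpart1 i j hij)
  have hadj := perm_adj e H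
  refine ⟨hpart1, ⟨hinj', hcp⟩, ?_⟩
  intro i j
  constructor
  · intro hgt
    rw [hE, hE]
    apply (hθ.2 (e i) (e j)).1
    have hne : ((e i : Fin (d+1)) : ℕ) ≠ ((e j : Fin (d+1)) : ℕ) := by
      intro h
      have hij : i = j := e.injective (Fin.ext h)
      subst hij
      simp at hgt
    have hij : (i : ℕ) + 1 < (j : ℕ) ∨ (j : ℕ) + 1 < (i : ℕ) := by
      rcases abs_cases (((i : ℕ) : ℤ) - ((j : ℕ) : ℤ)) with ⟨h1, h2⟩ | ⟨h1, h2⟩ <;> omega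
    have h1 : ¬ |(((e i : Fin (d+1)) : ℕ) : ℤ) - (((e j : Fin (d+1)) : ℕ) : ℤ)| = 1 := by
      rcases hij with h | h
      · exact H i j h
      · intro hx
        exact H j i h (by rwa [abs_sub_comm])
    rcases abs_cases ((((e i : Fin (d+1)) : ℕ) : ℤ) - (((e j : Fin (d+1)) : ℕ) : ℤ)) with
      ⟨h2, h3⟩ | ⟨h2, h3⟩ <;> omega
  · intro heq
    rw [hE, hE]
    apply (hθ.2 (e i) (e j)).2
    have hij : (j : ℕ) = (i : ℕ) + 1 ∨ (i : ℕ) = (j : ℕ) + 1 := by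
      rcases abs_cases (((i : ℕ) : ℤ) - ((j : ℕ) : ℤ)) with ⟨h1, h2⟩ | ⟨h1, h2⟩ <;> omega
    rcases hij with h | h
    · exact hadj i j h
    · rw [abs_sub_comm]
      exact hadj j i h
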